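/- Let Q be positive definite, μ ∈ R^p, e the all-ones vector, and c > 0. Then the minimum value of f(α,β) = α²(μ'Qμ + c) - (2α-1)μ'Qμ + β²(e'Qe) - 2β(1-α)(e'Qμ) over (α,β) ∈ R² equals c·π₂/(π₂ + c), where π₂ = (μ - (e'Qμ/(e'Qe))e)'Q(μ - (e'Qμ/(e'Qe))e). -/

import Mathlib

open Matrix

noncomputable section

/-- Quadratic form `x' Q y`. -/
def qf {p : ℕ} (Q : Matrix (Fin p) (Fin p) ℝ) (x y : Fin p → ℝ) : ℝ := x ⬝ᵥ Q.mulVec y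

/-- The all-ones vector in `ℝ^p`. -/
def ones (p : ℕ) : Fin p → ℝ := fun _ => 1

lemma qf_symm {p : ℕ} {Q : Matrix (Fin p) (Fin p) ℝ} (hQ : Q.PosDef) (x y : Fin p → ℝ) :
    qf Q x y = qf Q y x := by
  have h := hQ.1
  rw [Matrix.IsHermitian] at h
  have h2 : Qᵀ = Q := by
    ext i j
    have := congrFun (congrFun h i) j
    simpa [Matrix.conjTranspose_apply] using this
  unfold qf
  rw [Matrix.dotProduct_mulVec]
  nth_rewrite 1 [← h2]
  rw [Matrix.vecMul_transpose, dotProduct_comm]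

lemma qf_expand {p : ℕ} (Q : Matrix (Fin p) (Fin p) ℝ) (x y : Fin p → ℝ) (t : ℝ) :
    qf Q (x - t • y) (x - t • y)
      = qf Q x x - t * qf Q x y - t * qf Q y x + t ^ 2 * qf Q y y := by
  unfold qf
  simp [Matrix.mulVec_sub, Matrix.mulVec_smul, dotProduct_sub, sub_dotProduct,
    dotProduct_smul, smul_dotProduct, smul_eq_mul]
  ring

theorem stmt1 {p : ℕ} (hp : 0 < p) (Q : Matrix (Fin p) (Fin p) ℝ) (hQ : Q.PosDef)
    (μ : Fin p → ℝ) (c : ℝ) (hc : 0 < c)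
    (f : ℝ → ℝ → ℝ)
    (hf : ∀ α β : ℝ, f α β =
      α ^ 2 * (qf Q μ μ + c) - (2 * α - 1) * qf Q μ μ
        + β ^ 2 * qf Q (ones p) (ones p) - 2 * β * (1 - α) * qf Q (ones p) μ)
    (π₂ : ℝ)
    (hπ₂ : π₂ = qf Q (μ - (qf Q (ones p) μ / qf Q (ones p) (ones p)) • ones p)
        (μ - (qf Q (ones p) μ / qf Q (ones p) (ones p)) • ones p)) :
    IsLeast (Set.range fun ab : ℝ × ℝ => f ab.1 ab.2) (c * π₂ / (π₂ + c)) := by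
  set m := qf Q μ μ with hm'
  set E := qf Q (ones p) (ones p) with hE'
  set s := qf Q (ones p) μ with hs'
  have hE : 0 < E := by
    have h : (ones p) ≠ 0 := by
      intro h
      have := congrFun h ⟨0, hp⟩
      simp [ones] at this
    simpa [hE', qf, star] using hQ.dotProduct_mulVec_pos h
  have hEne : E ≠ 0 := ne_of_gt hE
  have hsymm : qf Q μ (ones p) = s := qf_symm hQ μ (ones p)
  have hm : m = π₂ + s ^ 2 / E := by
    rw [hπ₂, qf_expand, hsymm]
    field_simp
    ring
  have hπnn : 0 ≤ π₂ := by
    rw [hπ₂]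
    exact hQ.posSemidef.dotProduct_mulVec_nonneg _
  have hD : 0 < π₂ + c := by linarith
  have hDne : π₂ + c ≠ 0 := ne_of_gt hD
  have key : ∀ α β : ℝ, f α β
      = c * π₂ / (π₂ + c) + (π₂ + c) * (α - π₂ / (π₂ + c)) ^ 2
        + E * (β - (1 - α) * s / E) ^ 2 := by
    intro α β
    rw [hf, hm]
    field_simp
    ring
  constructor
  · refine ⟨(π₂ / (π₂ + c), (1 - π₂ / (π₂ + c)) * s / E), ?_⟩
    simp [key]
  · rintro x ⟨⟨α, β⟩, rfl⟩
    show c * π₂ / (π₂ + c) ≤ f α β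
    rw [key]
    have h1 : 0 ≤ (π₂ + c) * (α - π₂ / (π₂ + c)) ^ 2 := mul_nonneg hD.le (sq_nonneg _)
    have h2 : 0 ≤ E * (β - (1 - α) * s / E) ^ 2 := mul_nonneg hE.le (sq_nonneg _)
    linarith
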